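/- If A is an n×n complex matrix and there exists a positive integer k such that A^k is entrywise nonnegative, then there exists an integer h with 1 ≤ h ≤ k such that some eigenvalue λ of A of maximum modulus satisfies λ = ρ(A)·exp(2πi·h/k), where ρ(A) is the spectral radius of A. -/

import Mathlib

open ComplexOrder

open Matrix Complex

noncomputable def specRad {n : ℕ} (A : Matrix (Fin n) (Fin n) ℂ) : ℝ :=
  sSup ((fun z : ℂ => ‖z‖) '' spectrum ℂ A)

/-! ### Auxiliary lemmas -/

open Filter Finset in
/-- Bound on partial geometric sums for `z ≠ 1`, `|z| ≤ 1`. -/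
lemma aux_geomBound (z : ℂ) (hz : ‖z‖ ≤ 1) (h1 : z ≠ 1) (M : ℕ) :
    ‖∑ m ∈ Finset.range M, z ^ (m + 1)‖ ≤ 2 / ‖1 - z‖ := by
  have h2 : z - 1 ≠ 0 := sub_ne_zero.mpr h1
  have hsum : ∑ m ∈ Finset.range M, z ^ (m + 1) = z * ((z ^ M - 1) / (z - 1)) := by
    rw [← geom_sum_eq h1 M, Finset.mul_sum]
    exact Finset.sum_congr rfl fun m _ => by ring
  rw [hsum, norm_mul, norm_div]
  have h3 : ‖z ^ M - 1‖ ≤ 2 := by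
    calc ‖z ^ M - 1‖ ≤ ‖z ^ M‖ + ‖(1 : ℂ)‖ := by
          have := norm_sub_le (z ^ M) 1
          simpa using this
    _ ≤ 1 + 1 := by
        rw [norm_pow, norm_one]
        exact add_le_add (pow_le_one₀ (norm_nonneg z) hz) le_rfl
    _ = 2 := by norm_num
  have h4 : ‖z - 1‖ = ‖1 - z‖ := by
    rw [← norm_neg, neg_sub]
  rw [h4]
  have h5 : 0 < ‖1 - z‖ := by rw [← h4]; exact norm_pos_iff.mpr h2
  calc ‖z‖ * (‖z ^ M - 1‖ / ‖1 - z‖)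
      ≤ 1 * (2 / ‖1 - z‖) := by gcongr
    _ = 2 / ‖1 - z‖ := one_mul _

open Filter Finset in
/-- Core analytic lemma. -/
lemma aux_core (S : Finset ℂ) (D : ℂ → ℕ) (hD : ∀ μ ∈ S, 1 ≤ D μ) (ρ : ℝ) (hρ : 0 < ρ)
    (hle : ∀ μ ∈ S, ‖μ‖ ≤ ρ) (hattain : ∃ μ ∈ S, ‖μ‖ = ρ)
    (hnotmem : (ρ : ℂ) ∉ S)
    (hpos : ∀ m : ℕ, 0 ≤ ∑ μ ∈ S, (D μ : ℂ) * μ ^ (m + 1)) : False := by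
  classical
  have hρC : (ρ : ℂ) ≠ 0 := Complex.ofReal_ne_zero.mpr hρ.ne'
  set ζ : ℂ → ℂ := fun μ => μ / ρ with hζ
  have habs : ∀ μ ∈ S, ‖ζ μ‖ ≤ 1 := by
    intro μ hμ
    rw [hζ]
    simp only [norm_div, Complex.norm_real, Real.norm_eq_abs, abs_of_pos hρ]
    exact div_le_one_of_le₀ (hle μ hμ) hρ.le
  have hζρ : ∀ μ : ℂ, ζ μ = 1 → μ = (ρ : ℂ) := by
    intro μ h
    have : μ = (ρ : ℂ) * 1 := by
      rw [← h, hζ]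
      field_simp
    simpa using this
  have hne1 : ∀ μ ∈ S, ζ μ ≠ 1 := by
    intro μ hμ h
    exact hnotmem (hζρ μ h ▸ hμ)
  set q : ℕ → ℂ := fun m => ∑ μ ∈ S, (D μ : ℂ) * (ζ μ) ^ (m + 1) with hq
  have hq_eq : ∀ m, q m = ((((ρ : ℝ) ^ (m + 1))⁻¹ : ℝ) : ℂ) * ∑ μ ∈ S, (D μ : ℂ) * μ ^ (m + 1) := by
    intro m
    rw [hq, Finset.mul_sum]
    refine Finset.sum_congr rfl fun μ hμ => ?_
    have hcast : ((((ρ : ℝ) ^ (m + 1))⁻¹ : ℝ) : ℂ) = ((ρ : ℂ) ^ (m + 1))⁻¹ := by push_cast; ring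
    rw [hcast, hζ]
    simp only [div_pow]
    field_simp
  have hqre : ∀ m, 0 ≤ (q m).re ∧ (q m).im = 0 := by
    intro m
    have h := hpos m
    rw [Complex.le_def] at h
    simp only [Complex.zero_re, Complex.zero_im] at h
    have hinv : (0 : ℝ) ≤ ((ρ : ℝ) ^ (m + 1))⁻¹ := by positivity
    constructor
    · rw [hq_eq m, Complex.re_ofReal_mul]
      exact mul_nonneg hinv h.1
    · rw [hq_eq m, Complex.im_ofReal_mul, ← h.2, mul_zero]
  -- partial sums of `q` are bounded
  set C0 : ℝ := ∑ μ ∈ S, (D μ : ℝ) * (2 / ‖1 - ζ μ‖) with hC0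
  have hPS : ∀ M, (∑ m ∈ Finset.range M, (q m).re) ≤ C0 := by
    intro M
    have hswap : ∑ m ∈ Finset.range M, q m
        = ∑ μ ∈ S, (D μ : ℂ) * ∑ m ∈ Finset.range M, (ζ μ) ^ (m + 1) := by
      simp only [hq]
      rw [Finset.sum_comm]
      exact Finset.sum_congr rfl fun μ _ => (Finset.mul_sum _ _ _).symm
    calc ∑ m ∈ Finset.range M, (q m).re = (∑ m ∈ Finset.range M, q m).re := by
          rw [Complex.re_sum]
      _ ≤ ‖∑ m ∈ Finset.range M, q m‖ := Complex.re_le_norm _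
      _ = ‖∑ μ ∈ S, (D μ : ℂ) * ∑ m ∈ Finset.range M, (ζ μ) ^ (m + 1)‖ := by
          rw [hswap]
      _ ≤ ∑ μ ∈ S, ‖(D μ : ℂ) * ∑ m ∈ Finset.range M, (ζ μ) ^ (m + 1)‖ :=
          norm_sum_le _ _
      _ ≤ C0 := by
          rw [hC0]
          refine Finset.sum_le_sum fun μ hμ => ?_
          rw [norm_mul, Complex.norm_natCast]
          exact mul_le_mul_of_nonneg_left (aux_geomBound _ (habs μ hμ) (hne1 μ hμ) M)
            (Nat.cast_nonneg _)
  have hs_nonneg : ∀ m, 0 ≤ (q m).re := fun m => (hqre m).1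
  have hsummable : Summable (fun m => (q m).re) := summable_of_sum_range_le hs_nonneg hPS
  have hs0 : Tendsto (fun m => (q m).re) atTop (nhds 0) := hsummable.tendsto_atTop_zero
  have hq0 : Tendsto q atTop (nhds 0) := by
    have heq : q = fun m => (((q m).re : ℝ) : ℂ) := by
      funext m
      rw [Complex.ext_iff]
      constructor
      · simp
      · simp [(hqre m).2]
    rw [heq]
    have := (Complex.continuous_ofReal.tendsto 0).comp hs0
    simpa [Function.comp_def] using this
  -- dominant part
  set T : Finset ℂ := S.filter (fun μ => ‖μ‖ = ρ) with hT
  set d : ℕ → ℂ := fun m => ∑ μ ∈ T, (D μ : ℂ) * (ζ μ) ^ (m + 1) with hd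
  set e : ℕ → ℂ := fun m => ∑ μ ∈ S \ T, (D μ : ℂ) * (ζ μ) ^ (m + 1) with he
  have hTsub : T ⊆ S := Finset.filter_subset _ _
  have hqde : ∀ m, q m = d m + e m := by
    intro m
    rw [hq, hd, he]
    simp only
    rw [← Finset.sum_sdiff hTsub, add_comm]
  have hTabs : ∀ μ ∈ T, ‖ζ μ‖ = 1 := by
    intro μ hμ
    rw [hT, Finset.mem_filter] at hμ
    rw [hζ]
    simp only [norm_div, Complex.norm_real, Real.norm_eq_abs, abs_of_pos hρ, hμ.2, div_self hρ.ne']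
  have he0 : Tendsto e atTop (nhds 0) := by
    have htend : Tendsto (fun m => ∑ μ ∈ S \ T, (D μ : ℂ) * (ζ μ) ^ (m + 1)) atTop
        (nhds (∑ μ ∈ S \ T, 0)) := by
      apply tendsto_finset_sum
      intro μ hμ
      have hμS : μ ∈ S := (Finset.mem_sdiff.mp hμ).1
      have hμT : μ ∉ T := (Finset.mem_sdiff.mp hμ).2
      have hlt : ‖ζ μ‖ < 1 := by
        refine lt_of_le_of_ne (habs μ hμS) ?_
        intro h
        apply hμT
        rw [hT, Finset.mem_filter]
        refine ⟨hμS, ?_⟩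
        rw [hζ] at h
        simp only [norm_div, Complex.norm_real, Real.norm_eq_abs, abs_of_pos hρ] at h
        field_simp at h
        linarith
      have h1 : Tendsto (fun m : ℕ => (ζ μ) ^ (m + 1)) atTop (nhds 0) :=
        (tendsto_pow_atTop_nhds_zero_of_norm_lt_one hlt).comp (tendsto_add_atTop_nat 1)
      simpa using h1.const_mul ((D μ : ℂ))
    rw [he]
    simpa using htend
  have hd0 : Tendsto d atTop (nhds 0) := by
    have hsub := hq0.sub he0
    simp only [sub_zero] at hsub
    have heq : (fun m => q m - e m) = d := by
      funext m; rw [hqde m]; ring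
    rwa [heq] at hsub
  have hnsq0 : Tendsto (fun m => Complex.normSq (d m)) atTop (nhds 0) := by
    have := (Complex.continuous_normSq.tendsto 0).comp hd0
    simpa [Function.comp_def] using this
  -- lower bound on sums of `normSq (d m)`
  have hTne : T.Nonempty := by
    obtain ⟨μ, hμ, hμa⟩ := hattain
    exact ⟨μ, Finset.mem_filter.mpr ⟨hμ, hμa⟩⟩
  set w : ℂ → ℂ → ℂ := fun ν μ => (starRingEnd ℂ) (ζ ν) * ζ μ with hw
  have hwabs : ∀ ν ∈ T, ∀ μ ∈ T, ‖w ν μ‖ ≤ 1 := by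
    intro ν hν μ hμ
    rw [hw]
    simp only [norm_mul, Complex.norm_conj]
    rw [hTabs ν hν, hTabs μ hμ, mul_one]
  have hdiagw : ∀ ν ∈ T, w ν ν = 1 := by
    intro ν hν
    rw [hw]
    simp only
    rw [← Complex.normSq_eq_conj_mul_self]
    have : Complex.normSq (ζ ν) = 1 := by
      rw [← Complex.sq_norm, hTabs ν hν]; norm_num
    rw [this]; norm_num
  have hwne1 : ∀ ν ∈ T, ∀ μ ∈ T, ν ≠ μ → w ν μ ≠ 1 := by
    intro ν hν μ hμ hne h
    apply hne
    have h2 : (starRingEnd ℂ) (ζ ν) * ζ ν = 1 := hdiagw ν hν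
    have hconj : (starRingEnd ℂ) (ζ ν) ≠ 0 := by
      intro hc
      rw [hc, zero_mul] at h2
      exact zero_ne_one h2
    have hζeq : ζ μ = ζ ν := by
      rw [hw] at h
      simp only at h
      exact mul_left_cancel₀ hconj (h.trans h2.symm)
    have hdiv : μ / (ρ : ℂ) = ν / (ρ : ℂ) := hζeq
    field_simp at hdiv
    exact hdiv.symm
  set K : ℝ := ∑ ν ∈ T, ∑ μ ∈ T.erase ν, (D ν : ℝ) * (D μ : ℝ) * (2 / ‖1 - w ν μ‖)
    with hK
  have hlower : ∀ M : ℕ, (M : ℝ) - K ≤ ∑ m ∈ Finset.range M, Complex.normSq (d m) := by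
    intro M
    have hpoint : ∀ m : ℕ, ((Complex.normSq (d m) : ℝ) : ℂ)
        = ∑ ν ∈ T, ∑ μ ∈ T, ((D ν : ℂ) * (D μ : ℂ)) * (w ν μ) ^ (m + 1) := by
      intro m
      rw [Complex.normSq_eq_conj_mul_self]
      have hconj : (starRingEnd ℂ) (d m)
          = ∑ ν ∈ T, (D ν : ℂ) * ((starRingEnd ℂ) (ζ ν)) ^ (m + 1) := by
        rw [hd]
        simp only
        rw [map_sum]
        refine Finset.sum_congr rfl fun ν _ => ?_
        rw [_root_.map_mul, map_pow, Complex.conj_natCast]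
      rw [hconj, hd]
      simp only
      rw [Finset.sum_mul_sum]
      refine Finset.sum_congr rfl fun ν _ => Finset.sum_congr rfl fun μ _ => ?_
      rw [hw]
      simp only
      rw [mul_pow]
      ring
    have hsum2 : ((∑ m ∈ Finset.range M, Complex.normSq (d m) : ℝ) : ℂ)
        = ∑ ν ∈ T, ∑ μ ∈ T, ((D ν : ℂ) * (D μ : ℂ)) * ∑ m ∈ Finset.range M, (w ν μ) ^ (m + 1) := by
      rw [Complex.ofReal_sum]
      rw [Finset.sum_congr rfl (fun m _ => hpoint m)]
      rw [Finset.sum_comm]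
      refine Finset.sum_congr rfl fun ν _ => ?_
      rw [Finset.sum_comm]
      exact Finset.sum_congr rfl fun μ _ => (Finset.mul_sum _ _ _).symm
    have hre : ∑ m ∈ Finset.range M, Complex.normSq (d m)
        = ∑ ν ∈ T, ∑ μ ∈ T,
            (((D ν : ℂ) * (D μ : ℂ)) * ∑ m ∈ Finset.range M, (w ν μ) ^ (m + 1)).re := by
      have hcr := congrArg Complex.re hsum2
      rw [Complex.ofReal_re] at hcr
      rw [hcr, Complex.re_sum]
      exact Finset.sum_congr rfl fun ν _ => by rw [Complex.re_sum]
    rw [hre]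
    have hdiag : ∀ ν ∈ T, (((D ν : ℂ) * (D ν : ℂ)) * ∑ m ∈ Finset.range M, (w ν ν) ^ (m + 1)).re
        = (D ν : ℝ) * (D ν : ℝ) * M := by
      intro ν hν
      rw [hdiagw ν hν]
      simp only [one_pow, Finset.sum_const, Finset.card_range, nsmul_eq_mul, mul_one]
      push_cast
      simp
    have hoff : ∀ ν ∈ T, ∀ μ ∈ T.erase ν,
        -((D ν : ℝ) * (D μ : ℝ) * (2 / ‖1 - w ν μ‖))
          ≤ (((D ν : ℂ) * (D μ : ℂ)) * ∑ m ∈ Finset.range M, (w ν μ) ^ (m + 1)).re := by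
      intro ν hν μ hμ'
      have hμT : μ ∈ T := Finset.mem_of_mem_erase hμ'
      have hne : ν ≠ μ := (Finset.ne_of_mem_erase hμ').symm
      set z := ((D ν : ℂ) * (D μ : ℂ)) * ∑ m ∈ Finset.range M, (w ν μ) ^ (m + 1) with hz
      have h1 : -(‖z‖) ≤ z.re := by
        have ha := Complex.abs_re_le_norm z
        have hb := neg_abs_le z.re
        linarith [abs_nonneg z.re]
      refine le_trans (neg_le_neg ?_) h1
      rw [hz, norm_mul, norm_mul, Complex.norm_natCast,
        Complex.norm_natCast]
      refine mul_le_mul_of_nonneg_left ?_ (by positivity)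
      exact aux_geomBound _ (hwabs ν hν μ hμT) (hwne1 ν hν μ hμT hne) M
    have hbound : ∀ ν ∈ T,
        (D ν : ℝ) * (D ν : ℝ) * M
            - ∑ μ ∈ T.erase ν, (D ν : ℝ) * (D μ : ℝ) * (2 / ‖1 - w ν μ‖)
          ≤ ∑ μ ∈ T, (((D ν : ℂ) * (D μ : ℂ)) * ∑ m ∈ Finset.range M, (w ν μ) ^ (m + 1)).re := by
      intro ν hν
      rw [← Finset.add_sum_erase _ _ hν]
      have h1 := hdiag ν hν
      have h2 : -(∑ μ ∈ T.erase ν, (D ν : ℝ) * (D μ : ℝ) * (2 / ‖1 - w ν μ‖))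
          ≤ ∑ μ ∈ T.erase ν,
              (((D ν : ℂ) * (D μ : ℂ)) * ∑ m ∈ Finset.range M, (w ν μ) ^ (m + 1)).re := by
        rw [← Finset.sum_neg_distrib]
        exact Finset.sum_le_sum (hoff ν hν)
      linarith
    have htotal : ∑ ν ∈ T, ((D ν : ℝ) * (D ν : ℝ) * M
            - ∑ μ ∈ T.erase ν, (D ν : ℝ) * (D μ : ℝ) * (2 / ‖1 - w ν μ‖))
        ≤ ∑ ν ∈ T, ∑ μ ∈ T,
            (((D ν : ℂ) * (D μ : ℂ)) * ∑ m ∈ Finset.range M, (w ν μ) ^ (m + 1)).re :=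
      Finset.sum_le_sum hbound
    have hsplit : ∑ ν ∈ T, ((D ν : ℝ) * (D ν : ℝ) * M
            - ∑ μ ∈ T.erase ν, (D ν : ℝ) * (D μ : ℝ) * (2 / ‖1 - w ν μ‖))
        = (∑ ν ∈ T, (D ν : ℝ) * (D ν : ℝ) * M) - K := by
      rw [Finset.sum_sub_distrib, hK]
    have hone : (M : ℝ) ≤ ∑ ν ∈ T, (D ν : ℝ) * (D ν : ℝ) * M := by
      obtain ⟨ν0, hν0⟩ := hTne
      have h1 : (1 : ℝ) * 1 * M ≤ (D ν0 : ℝ) * (D ν0 : ℝ) * M := by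
        have hcast : (1 : ℝ) ≤ (D ν0 : ℝ) := by exact_mod_cast hD ν0 (hTsub hν0)
        have hM0 : (0:ℝ) ≤ (M:ℝ) := Nat.cast_nonneg _
        have hsq : (1:ℝ) * 1 ≤ (D ν0 : ℝ) * (D ν0 : ℝ) :=
          mul_le_mul hcast hcast zero_le_one (by linarith)
        exact mul_le_mul_of_nonneg_right hsq hM0
      calc (M : ℝ) = (1:ℝ) * 1 * M := by ring
        _ ≤ (D ν0 : ℝ) * (D ν0 : ℝ) * M := h1
        _ ≤ ∑ ν ∈ T, (D ν : ℝ) * (D ν : ℝ) * M := by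
            refine Finset.single_le_sum (f := fun ν => (D ν : ℝ) * (D ν : ℝ) * (M : ℝ))
              (fun ν _ => by positivity) hν0
    linarith
  -- final contradiction
  obtain ⟨M1, hM1⟩ := (Metric.tendsto_atTop.mp hnsq0 (1/2) (by norm_num))
  set K' : ℝ := ∑ m ∈ Finset.range M1, Complex.normSq (d m) with hK'
  obtain ⟨M2, hM2⟩ := exists_nat_gt (2 * (K + K') + 2 * M1)
  set M : ℕ := max M1 M2 with hM
  have hMM1 : M1 ≤ M := le_max_left _ _
  have hMb : 2 * (K + K') + 2 * M1 < (M : ℝ) :=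
    lt_of_lt_of_le hM2 (by exact_mod_cast le_max_right M1 M2)
  have hsplitM : ∑ m ∈ Finset.range M, Complex.normSq (d m)
      = K' + ∑ m ∈ Finset.Ico M1 M, Complex.normSq (d m) := by
    rw [hK', ← Finset.sum_range_add_sum_Ico _ hMM1]
  have h1 : ∑ m ∈ Finset.Ico M1 M, Complex.normSq (d m)
      ≤ ∑ m ∈ Finset.Ico M1 M, (1/2 : ℝ) := by
    refine Finset.sum_le_sum fun m hm => ?_
    have := hM1 m (Finset.mem_Ico.mp hm).1
    rw [Real.dist_eq, sub_zero] at this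
    exact le_of_lt (lt_of_abs_lt this)
  have h2 : ∑ m ∈ Finset.Ico M1 M, (1/2 : ℝ) = ((M - M1 : ℕ) : ℝ) * (1/2) := by
    rw [Finset.sum_const, Nat.card_Ico, nsmul_eq_mul]
  have h3 : ((M - M1 : ℕ) : ℝ) ≤ (M : ℝ) := by exact_mod_cast Nat.sub_le M M1
  have h4 := hlower M
  linarith


/-- Trace of powers of an endomorphism whose difference with a scalar is nilpotent. -/
lemma aux_trace_pow_nilp {W : Type*} [AddCommGroup W] [Module ℂ W] [FiniteDimensional ℂ W]
    (g : Module.End ℂ W) (μ : ℂ)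
    (hN : IsNilpotent (g - algebraMap ℂ (Module.End ℂ W) μ)) (m : ℕ) :
    LinearMap.trace ℂ W (g ^ m) = (Module.finrank ℂ W : ℂ) * μ ^ m := by
  set N := g - algebraMap ℂ (Module.End ℂ W) μ with hNdef
  have hg : g = algebraMap ℂ (Module.End ℂ W) μ + N := by rw [hNdef]; abel
  have hcomm : Commute (algebraMap ℂ (Module.End ℂ W) μ) N := Algebra.commutes μ N
  rw [hg, hcomm.add_pow, map_sum, Finset.sum_range_succ]
  have hzero : ∀ j ∈ Finset.range m,
      LinearMap.trace ℂ W ((algebraMap ℂ (Module.End ℂ W) μ) ^ j * N ^ (m - j)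
        * ((m.choose j : ℕ) : Module.End ℂ W)) = 0 := by
    intro j hj
    have hj' : j < m := Finset.mem_range.mp hj
    have hterm : (algebraMap ℂ (Module.End ℂ W) μ) ^ j * N ^ (m - j)
        * ((m.choose j : ℕ) : Module.End ℂ W)
        = ((m.choose j : ℂ) * μ ^ j) • N ^ (m - j) := by
      rw [← map_pow, ← map_natCast (algebraMap ℂ (Module.End ℂ W)) (m.choose j), mul_assoc,
        ← Algebra.commutes ((m.choose j : ℕ) : ℂ) (N ^ (m - j)), ← mul_assoc, ← _root_.map_mul,
        mul_comm (μ ^ j) _, ← Algebra.smul_def]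
    rw [hterm, _root_.map_smul]
    have hnil : IsNilpotent (N ^ (m - j)) := hN.pow_of_pos (by omega)
    have htr0 := LinearMap.isNilpotent_trace_of_isNilpotent hnil
    rw [htr0.eq_zero, smul_zero]
  rw [Finset.sum_eq_zero hzero, zero_add, Nat.sub_self, pow_zero, mul_one, Nat.choose_self,
    Nat.cast_one, mul_one, ← map_pow, Algebra.algebraMap_eq_smul_one, _root_.map_smul,
    LinearMap.trace_one, smul_eq_mul, mul_comm]

/-- Trace of powers as a sum over generalized eigenvalues with multiplicities. -/
lemma aux_trace_pow {V : Type*} [AddCommGroup V] [Module ℂ V] [FiniteDimensional ℂ V]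
    (f : Module.End ℂ V) (hfin : {μ | f.maxGenEigenspace μ ≠ ⊥}.Finite) (m : ℕ) :
    LinearMap.trace ℂ V (f ^ m)
      = ∑ μ ∈ hfin.toFinset, (Module.finrank ℂ (f.maxGenEigenspace μ) : ℂ) * μ ^ m := by
  classical
  have hds := DirectSum.isInternal_submodule_of_iSupIndep_of_iSup_eq_top
    f.independent_maxGenEigenspace f.iSup_maxGenEigenspace_eq_top
  have hmapsto : ∀ μ : ℂ,
      Set.MapsTo (f ^ m) (f.maxGenEigenspace μ) (f.maxGenEigenspace μ) :=
    fun μ => Module.End.mapsTo_maxGenEigenspace_of_comm ((Commute.refl f).pow_right m) μ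
  rw [LinearMap.trace_eq_sum_trace_restrict' hds hfin hmapsto]
  refine Finset.sum_congr rfl fun μ hμ => ?_
  have hres : (f ^ m).restrict (hmapsto μ)
      = (f.restrict (Module.End.mapsTo_maxGenEigenspace_of_comm rfl μ)) ^ m :=
    (Module.End.pow_restrict m _ _).symm
  rw [hres]
  refine aux_trace_pow_nilp _ μ ?_ m
  obtain ⟨nn, hnn⟩ := f.isNilpotent_restrict_maxGenEigenspace_sub_algebraMap μ
  refine ⟨nn, ?_⟩
  have heq : (f.restrict (Module.End.mapsTo_maxGenEigenspace_of_comm rfl μ))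
      - algebraMap ℂ (Module.End ℂ (f.maxGenEigenspace μ)) μ
      = (f - algebraMap ℂ (Module.End ℂ V) μ).restrict
          (Module.End.mapsTo_maxGenEigenspace_of_comm
            (Algebra.mul_sub_algebraMap_commutes f μ) μ) := by
    ext x
    simp [LinearMap.restrict_apply, Algebra.algebraMap_eq_smul_one]
    rfl
  rw [heq]
  exact hnn

/-- Key algebraic input: the traces of powers of a complex matrix are sums of powers of
its spectrum with positive integer multiplicities. -/
lemma aux_matrix_key {n : ℕ} (B : Matrix (Fin n) (Fin n) ℂ) :
    ∃ S : Finset ℂ, (↑S : Set ℂ) = spectrum ℂ B ∧ ∃ D : ℂ → ℕ, (∀ μ ∈ S, 1 ≤ D μ) ∧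
      ∀ m : ℕ, (B ^ m).trace = ∑ μ ∈ S, (D μ : ℂ) * μ ^ m := by
  classical
  set b := Pi.basisFun ℂ (Fin n) with hb
  set f : Module.End ℂ (Fin n → ℂ) := Matrix.toLinAlgEquiv b B with hf
  have hfin : {μ | f.maxGenEigenspace μ ≠ ⊥}.Finite :=
    WellFoundedGT.finite_ne_bot_of_iSupIndep f.independent_maxGenEigenspace
  have hspec : ∀ μ : ℂ, f.maxGenEigenspace μ ≠ ⊥ ↔ μ ∈ spectrum ℂ B := by
    intro μ
    rw [← AlgEquiv.spectrum_eq (Matrix.toLinAlgEquiv b) B, ← hf,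
      ← Module.End.hasUnifEigenvalue_iff_mem_spectrum]
    have h1 : (f.maxGenEigenspace μ ≠ ⊥) ↔ Module.End.HasUnifEigenvalue f μ ⊤ := Iff.rfl
    rw [h1, Module.End.hasUnifEigenvalue_iff_hasUnifEigenvalue_one]
    simp
  refine ⟨hfin.toFinset, ?_, fun μ => Module.finrank ℂ (f.maxGenEigenspace μ), ?_, ?_⟩
  · ext μ
    simp only [Set.Finite.coe_toFinset, Set.mem_setOf_eq]
    exact hspec μ
  · intro μ hμ
    rw [Set.Finite.mem_toFinset] at hμ
    have : Nontrivial (f.maxGenEigenspace μ) := Submodule.nontrivial_iff_ne_bot.mpr hμ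
    exact Module.finrank_pos
  · intro m
    have htr := aux_trace_pow f hfin m
    have hmat : (LinearMap.toMatrix b b) ((Matrix.toLinAlgEquiv b) (B ^ m)) = B ^ m := by
      have h0 := LinearMap.toMatrixAlgEquiv_toLinAlgEquiv b (B ^ m)
      simpa [LinearMap.toMatrixAlgEquiv, AlgEquiv.ofLinearEquiv_apply] using h0
    have hLHS : LinearMap.trace ℂ (Fin n → ℂ) (f ^ m) = (B ^ m).trace := by
      rw [hf, ← map_pow, LinearMap.trace_eq_matrix_trace ℂ b, hmat]
    rw [← hLHS]
    exact htr

lemma aux_pow_nonneg {n : ℕ} (B : Matrix (Fin n) (Fin n) ℂ) (hB : ∀ i j, 0 ≤ B i j) (m : ℕ) :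
    ∀ i j, 0 ≤ (B ^ (m + 1)) i j := by
  induction m with
  | zero => simpa [pow_one] using hB
  | succ m ih =>
    intro i j
    rw [pow_succ, Matrix.mul_apply]
    exact Finset.sum_nonneg fun l _ => mul_nonneg (ih i l) (hB l j)

theorem stmt_0 {n : ℕ} (hn : 0 < n) (A : Matrix (Fin n) (Fin n) ℂ) (k : ℕ) (hk : 1 ≤ k)
    (hnonneg : ∀ i j, 0 ≤ (A ^ k) i j) :
    ∃ h : ℕ, 1 ≤ h ∧ h ≤ k ∧ ∃ lam ∈ spectrum ℂ A,
      ‖lam‖ = specRad A ∧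
      lam = (specRad A : ℂ) * Complex.exp (2 * Real.pi * Complex.I * h / k) := by
  classical
  have hk0 : 0 < k := hk
  haveI : Nonempty (Fin n) := ⟨⟨0, hn⟩⟩
  have hfinA : (spectrum ℂ A).Finite := A.finite_spectrum
  have hnonemptyA : (spectrum ℂ A).Nonempty := by
    obtain ⟨c, hc⟩ := Module.End.exists_eigenvalue
      (Matrix.toLinAlgEquiv (Pi.basisFun ℂ (Fin n)) A)
    exact ⟨c, (AlgEquiv.spectrum_eq (Matrix.toLinAlgEquiv (Pi.basisFun ℂ (Fin n))) A) ▸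
      hc.mem_spectrum⟩
  set ρ := specRad A with hρdef
  have himg : ((fun z : ℂ => ‖z‖) '' spectrum ℂ A).Finite := hfinA.image _
  have himgne : ((fun z : ℂ => ‖z‖) '' spectrum ℂ A).Nonempty := hnonemptyA.image _
  have hρmem : ρ ∈ (fun z : ℂ => ‖z‖) '' spectrum ℂ A := by
    rw [hρdef, specRad]
    exact himgne.csSup_mem himg
  have hub : ∀ μ ∈ spectrum ℂ A, ‖μ‖ ≤ ρ := by
    intro μ hμ
    rw [hρdef, specRad]
    exact le_csSup himg.bddAbove ⟨μ, hμ, rfl⟩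
  obtain ⟨lam0, hlam0mem, hlam0abs⟩ := hρmem
  simp only at hlam0abs
  have hρ0 : 0 ≤ ρ := hlam0abs ▸ norm_nonneg lam0
  have hspecB : spectrum ℂ (A ^ k) = (fun x => x ^ k) '' spectrum ℂ A :=
    spectrum.map_pow_of_pos A hk0
  -- the key claim : `ρ^k` is in the spectrum of `A^k`
  have hkey : (ρ : ℂ) ^ k ∈ spectrum ℂ (A ^ k) := by
    rcases eq_or_lt_of_le hρ0 with h0 | hpos
    · have hlam00 : lam0 = 0 := by
        have habs0 : ‖lam0‖ = 0 := by rw [hlam0abs, ← h0]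
        exact norm_eq_zero.mp habs0
      rw [hspecB]
      refine ⟨lam0, hlam0mem, ?_⟩
      rw [hlam00, ← h0]
      simp [zero_pow hk0.ne']
    · by_contra hnot
      obtain ⟨S, hS, D, hD, htr⟩ := aux_matrix_key (A ^ k)
      refine aux_core S D hD (ρ ^ k) (pow_pos hpos k) ?_ ?_ ?_ ?_
      · intro μ hμ
        have hμ' : μ ∈ spectrum ℂ (A ^ k) := by rw [← hS]; exact hμ
        rw [hspecB] at hμ'
        obtain ⟨lam, hlam, rfl⟩ := hμ'
        rw [norm_pow]
        exact pow_le_pow_left₀ (norm_nonneg lam) (hub lam hlam) k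
      · refine ⟨lam0 ^ k, ?_, ?_⟩
        · have : lam0 ^ k ∈ spectrum ℂ (A ^ k) := by
            rw [hspecB]; exact ⟨lam0, hlam0mem, rfl⟩
          have hmem : lam0 ^ k ∈ (↑S : Set ℂ) := by rw [hS]; exact this
          exact_mod_cast hmem
        · rw [norm_pow, hlam0abs]
      · intro hmem
        apply hnot
        have : ((ρ ^ k : ℝ) : ℂ) ∈ (↑S : Set ℂ) := hmem
        rw [hS] at this
        rwa [Complex.ofReal_pow] at this
      · intro m
        rw [← htr (m + 1)]
        have hent := aux_pow_nonneg (A ^ k) hnonneg m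
        rw [Matrix.trace]
        exact Finset.sum_nonneg fun i _ => hent i i
  -- extract an eigenvalue of `A` with `lam ^ k = ρ ^ k`
  rw [hspecB] at hkey
  obtain ⟨lam, hlammem, hlampow⟩ := hkey
  simp only at hlampow
  have habslam : ‖lam‖ = ρ := by
    have h1 : (‖lam‖) ^ k = ρ ^ k := by
      have h2 := congrArg (fun z : ℂ => ‖z‖) hlampow
      rwa [norm_pow, norm_pow, Complex.norm_real, Real.norm_eq_abs,
        _root_.abs_of_nonneg hρ0] at h2
    by_contra hne
    rcases lt_or_gt_of_ne hne with h | h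
    · have := pow_lt_pow_left₀ h (norm_nonneg lam) hk0.ne'
      linarith
    · have := pow_lt_pow_left₀ h hρ0 hk0.ne'
      linarith
  rcases eq_or_lt_of_le hρ0 with h0 | hpos
  · refine ⟨k, hk, le_rfl, lam, hlammem, habslam, ?_⟩
    have hlam0 : lam = 0 := by
      have habs0 : ‖lam‖ = 0 := by rw [habslam, ← h0]
      exact norm_eq_zero.mp habs0
    rw [hlam0, ← h0]
    simp
  · have hρC : (ρ : ℂ) ≠ 0 := Complex.ofReal_ne_zero.mpr hpos.ne'
    set ζ : ℂ := lam / ρ with hζ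
    have hζk : ζ ^ k = 1 := by
      rw [hζ, div_pow, hlampow, div_self (pow_ne_zero k hρC)]
    haveI : NeZero k := ⟨hk0.ne'⟩
    obtain ⟨i, hik, hi⟩ := (Complex.isPrimitiveRoot_exp k hk0.ne').eq_pow_of_pow_eq_one hζk
    have hexp : Complex.exp (2 * Real.pi * Complex.I / k) ^ i
        = Complex.exp (2 * Real.pi * Complex.I * i / k) := by
      rw [← Complex.exp_nat_mul]
      congr 1
      ring
    have hlameq : lam = (ρ : ℂ) * ζ := by
      rw [hζ]; field_simp
    have hkC : (k : ℂ) ≠ 0 := by exact_mod_cast hk0.ne'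
    rcases Nat.eq_zero_or_pos i with hi0 | hipos
    · refine ⟨k, hk, le_rfl, lam, hlammem, habslam, ?_⟩
      have hexpk : Complex.exp (2 * Real.pi * Complex.I * (k : ℕ) / (k : ℕ)) = 1 := by
        rw [mul_div_assoc]
        rw [div_self hkC, mul_one, Complex.exp_two_pi_mul_I]
      rw [hlameq, ← hi, hi0, pow_zero, hexpk]
    · refine ⟨i, hipos, le_of_lt hik, lam, hlammem, habslam, ?_⟩
      rw [hlameq, ← hi, hexp]
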